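/- Let R = F_1 × ⋯ × F_n be a direct product of fields with n ≥ 2. Then the essential annihilating-ideal graph EG(R) is Class 1, i.e., its edge chromatic number equals its maximum degree Δ(EG(R)). -/

import Mathlib

/-- An ideal is essential if it intersects every nonzero ideal nontrivially. -/
def IsEssentialIdeal (R : Type*) [CommRing R] (E : Ideal R) : Prop :=
  ∀ J : Ideal R, J ≠ ⊥ → E ⊓ J ≠ ⊥

/-- Vertices of the essential annihilating-ideal graph: nonzero ideals with
nonzero annihilator. -/
def AnnVertex (R : Type*) [CommRing R] : Type _ :=
  {I : Ideal R // I ≠ ⊥ ∧ Submodule.annihilator I ≠ ⊥}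

/-- The essential annihilating-ideal graph `EG(R)`. -/
def EG (R : Type*) [CommRing R] : SimpleGraph (AnnVertex R) where
  Adj I J := I ≠ J ∧ IsEssentialIdeal R (Submodule.annihilator (I.1 * J.1))
  symm := by
    constructor
    intro I J h
    refine ⟨h.1.symm, ?_⟩
    rw [mul_comm]
    exact h.2
  loopless := by constructor; intro I h; exact h.1 rfl

/-- `G` has a proper edge coloring with `k` colors. -/
def HasProperEdgeColoring {V : Type*} (G : SimpleGraph V) (k : ℕ) : Prop :=
  ∃ c : V → V → Fin k,
    (∀ a b, G.Adj a b → c a b = c b a) ∧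
    (∀ a b b', G.Adj a b → G.Adj a b' → b ≠ b' → c a b ≠ c a b')

section Supp

variable {n : ℕ} {F : Fin n → Type*} [∀ i, Field (F i)]

open scoped Classical in
/-- The support of an ideal of a finite product of fields. -/
noncomputable def suppI (I : Ideal (∀ i, F i)) : Finset (Fin n) :=
  Finset.univ.filter fun i => ∃ x ∈ I, x i ≠ 0

lemma mem_suppI {I : Ideal (∀ i, F i)} {i : Fin n} :
    i ∈ suppI I ↔ ∃ x ∈ I, x i ≠ 0 := by
  classical
  simp [suppI]

lemma single_mem_of_mem_suppI {I : Ideal (∀ i, F i)} {i : Fin n}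
    (h : i ∈ suppI I) (a : F i) : Pi.single i a ∈ I := by
  obtain ⟨y, hy, hyi⟩ := mem_suppI.1 h
  have key : Pi.single i (a * (y i)⁻¹) * y = Pi.single i a := by
    funext j
    by_cases hj : j = i
    · subst hj
      simp [mul_assoc, inv_mul_cancel₀ hyi]
    · simp [Pi.single_eq_of_ne hj]
  rw [← key]
  exact I.mul_mem_left _ hy

lemma mem_ideal_iff {I : Ideal (∀ i, F i)} {x : ∀ i, F i} :
    x ∈ I ↔ ∀ i, x i ≠ 0 → i ∈ suppI I := by
  constructor
  · intro hx i hi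
    exact mem_suppI.2 ⟨x, hx, hi⟩
  · intro h
    have hx : x = ∑ i, Pi.single i (x i) := (Finset.univ_sum_single x).symm
    rw [hx]
    refine Submodule.sum_mem _ fun i _ => ?_
    by_cases hi : x i = 0
    · rw [hi, Pi.single_zero]; exact I.zero_mem
    · exact single_mem_of_mem_suppI (h i hi) _

lemma suppI_mono {I J : Ideal (∀ i, F i)} (h : I ≤ J) : suppI I ⊆ suppI J := by
  intro i hi
  obtain ⟨x, hx, hxi⟩ := mem_suppI.1 hi
  exact mem_suppI.2 ⟨x, h hx, hxi⟩

lemma ideal_eq_of_suppI_eq {I J : Ideal (∀ i, F i)} (h : suppI I = suppI J) : I = J := by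
  apply le_antisymm
  · intro x hx
    rw [mem_ideal_iff] at hx ⊢
    intro i hi
    rw [← h]
    exact hx i hi
  · intro x hx
    rw [mem_ideal_iff] at hx ⊢
    intro i hi
    rw [h]
    exact hx i hi

lemma suppI_eq_empty_iff {I : Ideal (∀ i, F i)} : suppI I = ∅ ↔ I = ⊥ := by
  constructor
  · intro h
    refine le_antisymm (fun x hx => ?_) bot_le
    rw [mem_ideal_iff] at hx
    have : x = 0 := by
      funext i
      by_contra hxi
      have := hx i hxi
      simp [h] at this
    simpa [Ideal.mem_bot] using this
  · rintro rfl
    ext i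
    simp only [mem_suppI, Finset.notMem_empty, iff_false]
    rintro ⟨x, hx, hxi⟩
    rw [Ideal.mem_bot] at hx
    simp [hx] at hxi

/-- The ideal of functions supported inside `S`. -/
def idealOf (F : Fin n → Type*) [∀ i, Field (F i)] (S : Finset (Fin n)) : Ideal (∀ i, F i) where
  carrier := {x | ∀ i, i ∉ S → x i = 0}
  add_mem' := by intro a b ha hb i hi; simp [ha i hi, hb i hi]
  zero_mem' := by intro i _; rfl
  smul_mem' := by intro c x hx i hi; simp [smul_eq_mul, hx i hi]

lemma mem_idealOf {S : Finset (Fin n)} {x : ∀ i, F i} :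
    x ∈ idealOf F S ↔ ∀ i, i ∉ S → x i = 0 := Iff.rfl

lemma suppI_idealOf (S : Finset (Fin n)) : suppI (idealOf F S) = S := by
  ext i
  rw [mem_suppI]
  constructor
  · rintro ⟨x, hx, hxi⟩
    by_contra hi
    exact hxi (hx i hi)
  · intro hi
    refine ⟨Pi.single i 1, ?_, by simp⟩
    intro j hj
    exact Pi.single_eq_of_ne (fun h : j = i => hj (h ▸ hi)) _

set_option maxHeartbeats 1000000 in
lemma suppI_mul (I J : Ideal (∀ i, F i)) :
    suppI (I * J) = suppI I ∩ suppI J := by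
  apply le_antisymm
  · intro i hi
    rw [Finset.mem_inter]
    exact ⟨suppI_mono (Ideal.mul_le_left (I := I) (J := J)) hi, suppI_mono (Ideal.mul_le_right (I := I) (J := J)) hi⟩
  · intro i hi
    rw [Finset.mem_inter] at hi
    have h1 : (Pi.single i 1 : ∀ i, F i) ∈ I := single_mem_of_mem_suppI hi.1 1
    have h2 : (Pi.single i 1 : ∀ i, F i) ∈ J := single_mem_of_mem_suppI hi.2 1
    have hm : (Pi.single i 1 : ∀ i, F i) * Pi.single i 1 ∈ I * J :=
      Ideal.mul_mem_mul h1 h2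
    refine mem_suppI.2 ⟨_, hm, ?_⟩
    simp

lemma suppI_annihilator (I : Ideal (∀ i, F i)) :
    suppI (Submodule.annihilator I) = (suppI I)ᶜ := by
  have : Submodule.annihilator I = idealOf F (suppI I)ᶜ := by
    ext r
    rw [Submodule.mem_annihilator, mem_idealOf]
    constructor
    · intro h i hi
      rw [Finset.notMem_compl] at hi
      have := h _ (single_mem_of_mem_suppI hi (1 : F i))
      have := congrFun this i
      simpa using this
    · intro h x hx
      funext i
      by_cases hxi : x i = 0
      · simp [hxi]
      · have hi : i ∈ suppI I := mem_ideal_iff.1 hx i hxi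
        have : r i = 0 := h i (by simpa using hi)
        simp [smul_eq_mul, this]
  rw [this, suppI_idealOf]

lemma essential_iff {E : Ideal (∀ i, F i)} :
    IsEssentialIdeal (∀ i, F i) E ↔ suppI E = Finset.univ := by
  constructor
  · intro h
    by_contra hne
    obtain ⟨i, hi⟩ : ∃ i, i ∉ suppI E := by
      by_contra h'
      push_neg at h'
      exact hne (Finset.eq_univ_iff_forall.2 h')
    have hJ : idealOf F {i} ≠ ⊥ := by
      intro hb
      have := suppI_eq_empty_iff.2 hb
      rw [suppI_idealOf] at this
      simp at this
    refine h (idealOf F {i}) hJ ?_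
    refine le_antisymm (fun x hx => ?_) bot_le
    obtain ⟨hxE, hxJ⟩ := Submodule.mem_inf.1 hx
    rw [Ideal.mem_bot]
    funext j
    by_cases hj : j = i
    · subst hj
      by_contra hxj
      exact hi (mem_ideal_iff.1 hxE j hxj)
    · exact mem_idealOf.1 hxJ j (by simp [hj])
  · intro h J hJ
    have hE : E = ⊤ := by
      refine le_antisymm le_top fun x _ => ?_
      rw [mem_ideal_iff, h]
      intro i _
      exact Finset.mem_univ i
    rw [hE, top_inf_eq]
    exact hJ

end Supp
section Graph

variable {n : ℕ} {F : Fin n → Type*} [∀ i, Field (F i)]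

lemma vertex_supp_nonempty (v : AnnVertex (∀ i, F i)) : (suppI v.1).Nonempty := by
  rw [Finset.nonempty_iff_ne_empty]
  intro h
  exact v.2.1 (suppI_eq_empty_iff.1 h)

lemma vertex_supp_ne_univ (v : AnnVertex (∀ i, F i)) : suppI v.1 ≠ Finset.univ := by
  intro h
  apply v.2.2
  rw [← suppI_eq_empty_iff, suppI_annihilator, h, Finset.compl_univ]

lemma adj_iff {v w : AnnVertex (∀ i, F i)} :
    (EG (∀ i, F i)).Adj v w ↔ Disjoint (suppI v.1) (suppI w.1) := by
  constructor
  · intro h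
    have h2 := essential_iff.1 h.2
    rw [suppI_annihilator, suppI_mul] at h2
    rw [Finset.disjoint_iff_inter_eq_empty]
    have := congrArg compl h2
    rwa [compl_compl, Finset.compl_univ] at this
  · intro h
    constructor
    · intro he
      rw [Finset.disjoint_iff_inter_eq_empty, he, Finset.inter_self] at h
      exact Finset.Nonempty.ne_empty (vertex_supp_nonempty w) h
    · rw [essential_iff, suppI_annihilator, suppI_mul,
        Finset.disjoint_iff_inter_eq_empty.1 h, Finset.compl_empty]

/-- Build a vertex of `EG` from a nonempty proper finset. -/
def mkV (F : Fin n → Type*) [∀ i, Field (F i)] (S : Finset (Fin n))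
    (h1 : S.Nonempty) (h2 : S ≠ Finset.univ) : AnnVertex (∀ i, F i) :=
  ⟨idealOf F S,
    fun hb => h1.ne_empty (by rw [← suppI_idealOf (F := F) S, hb]; exact suppI_eq_empty_iff.2 rfl),
    fun hb => by
      have := suppI_eq_empty_iff.2 hb
      rw [suppI_annihilator, suppI_idealOf] at this
      exact h2 (by rwa [Finset.compl_eq_empty_iff] at this)⟩

lemma suppI_mkV {S : Finset (Fin n)} (h1 : S.Nonempty) (h2 : S ≠ Finset.univ) :
    suppI (mkV F S h1 h2).1 = S := suppI_idealOf S

/-- The neighbors of `v` correspond to nonempty subsets of the complement of its support. -/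
noncomputable def neighborEquiv (v : AnnVertex (∀ i, F i)) :
    ((EG (∀ i, F i)).neighborSet v) ≃
      {T : Finset (Fin n) // T ⊆ (suppI v.1)ᶜ ∧ T.Nonempty} where
  toFun w := ⟨suppI w.1.1,
    by
      have hd : Disjoint (suppI v.1) (suppI w.1.1) := adj_iff.1 w.2
      intro i hi
      exact Finset.mem_compl.2 fun hc => (Finset.disjoint_left.1 hd) hc hi,
    vertex_supp_nonempty w.1⟩
  invFun T := ⟨mkV F T.1 T.2.2
      (fun h => by
        have hv := vertex_supp_nonempty v
        obtain ⟨i, hi⟩ := hv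
        have : i ∈ (suppI v.1)ᶜ := T.2.1 (h ▸ Finset.mem_univ i)
        exact Finset.mem_compl.1 this hi),
    by
      rw [SimpleGraph.mem_neighborSet, adj_iff, suppI_mkV]
      rw [Finset.disjoint_right]
      intro i hi
      exact Finset.mem_compl.1 (T.2.1 hi)⟩
  left_inv w := by
    ext1
    exact Subtype.ext (ideal_eq_of_suppI_eq (by rw [suppI_mkV]))
  right_inv T := by
    ext1
    exact suppI_idealOf T.1

lemma card_nonempty_subsets (C : Finset (Fin n)) :
    Nat.card {T : Finset (Fin n) // T ⊆ C ∧ T.Nonempty} = 2 ^ C.card - 1 := by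
  classical
  have e : {T : Finset (Fin n) // T ⊆ C ∧ T.Nonempty} ≃
      {T // T ∈ C.powerset.erase ∅} := by
    apply Equiv.subtypeEquivRight
    intro T
    simp [Finset.mem_powerset, Finset.mem_erase, Finset.nonempty_iff_ne_empty, and_comm]
  rw [Nat.card_congr e, Nat.card_eq_finsetCard,
    Finset.card_erase_of_mem (Finset.empty_mem_powerset C), Finset.card_powerset]

lemma ncard_neighborSet (v : AnnVertex (∀ i, F i)) :
    ((EG (∀ i, F i)).neighborSet v).ncard = 2 ^ (n - (suppI v.1).card) - 1 := by
  rw [← Nat.card_coe_set_eq, Nat.card_congr (neighborEquiv v),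
    card_nonempty_subsets, Finset.card_compl, Fintype.card_fin]

end Graph
section Coloring

variable {n : ℕ}

/-- Canonical representative (not containing `z`) of the pair `{U, Uᶜ}`. -/
def repC (z : Fin n) (U : Finset (Fin n)) : Finset (Fin n) :=
  if z ∈ U then Uᶜ else U

lemma not_mem_repC (z : Fin n) (U : Finset (Fin n)) : z ∉ repC z U := by
  by_cases h : z ∈ U <;> simp [repC, h]

lemma repC_compl (z : Fin n) (U : Finset (Fin n)) : repC z Uᶜ = repC z U := by
  by_cases h : z ∈ U
  · have : z ∉ Uᶜ := by simp [h]
    simp [repC, h, this]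
  · have : z ∈ Uᶜ := by simp [h]
    simp [repC, h, this]

lemma repC_eq_cases {z : Fin n} {U U' : Finset (Fin n)}
    (h : repC z U = repC z U') : U = U' ∨ U = U'ᶜ := by
  unfold repC at h
  by_cases h1 : z ∈ U <;> by_cases h2 : z ∈ U' <;> simp [h1, h2] at h
  · left; exact h
  · right; rw [← h, compl_compl]
  · right; rw [h]
  · left; exact h

lemma repC_nonempty {z : Fin n} {U : Finset (Fin n)}
    (h1 : U.Nonempty) (h2 : U ≠ Finset.univ) : (repC z U).Nonempty := by
  by_cases h : z ∈ U
  · rw [repC, if_pos h]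
    rw [Finset.nonempty_iff_ne_empty]
    intro hc
    exact h2 (by rwa [Finset.compl_eq_empty_iff] at hc)
  · rwa [repC, if_neg h]

lemma repC_subset_compl_singleton (z : Fin n) (U : Finset (Fin n)) :
    repC z U ⊆ ({z} : Finset (Fin n))ᶜ := by
  intro i hi
  rw [Finset.mem_compl, Finset.mem_singleton]
  intro h
  exact not_mem_repC z U (h ▸ hi)

lemma card_colorType (z : Fin n) :
    Nat.card {T : Finset (Fin n) // T ⊆ ({z} : Finset (Fin n))ᶜ ∧ T.Nonempty} =
      2 ^ (n - 1) - 1 := by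
  rw [card_nonempty_subsets, Finset.card_compl, Fintype.card_fin, Finset.card_singleton]

/-- Encoding of the colors as elements of `Fin (2^(n-1)-1)`. -/
noncomputable def colorEquiv (z : Fin n) :
    {T : Finset (Fin n) // T ⊆ ({z} : Finset (Fin n))ᶜ ∧ T.Nonempty} ≃ Fin (2 ^ (n - 1) - 1) :=
  Finite.equivFinOfCardEq (card_colorType z)

variable {F : Fin n → Type*} [∀ i, Field (F i)]

/-- The set indexing the color of the edge `{v, w}`. -/
noncomputable def keyset (v w : AnnVertex (∀ i, F i)) : Finset (Fin n) :=
  if suppI v.1 ∪ suppI w.1 = Finset.univ then suppI v.1 else suppI v.1 ∪ suppI w.1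

lemma keyset_valid {v w : AnnVertex (∀ i, F i)} (h : (EG (∀ i, F i)).Adj v w) :
    (keyset v w).Nonempty ∧ keyset v w ≠ Finset.univ := by
  unfold keyset
  by_cases hu : suppI v.1 ∪ suppI w.1 = Finset.univ
  · rw [if_pos hu]
    exact ⟨vertex_supp_nonempty v, vertex_supp_ne_univ v⟩
  · rw [if_neg hu]
    exact ⟨(vertex_supp_nonempty v).mono Finset.subset_union_left, hu⟩

lemma repC_keyset_comm {z : Fin n} {v w : AnnVertex (∀ i, F i)}
    (h : (EG (∀ i, F i)).Adj v w) : repC z (keyset v w) = repC z (keyset w v) := by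
  have hd : Disjoint (suppI v.1) (suppI w.1) := adj_iff.1 h
  unfold keyset
  by_cases hu : suppI v.1 ∪ suppI w.1 = Finset.univ
  · have hu' : suppI w.1 ∪ suppI v.1 = Finset.univ := by rwa [Finset.union_comm]
    rw [if_pos hu, if_pos hu']
    have hc : IsCompl (suppI v.1) (suppI w.1) := ⟨hd, codisjoint_iff.2 hu⟩
    have : (suppI v.1)ᶜ = suppI w.1 := hc.compl_eq
    rw [← this, repC_compl]
  · have hu' : suppI w.1 ∪ suppI v.1 ≠ Finset.univ := by rwa [Finset.union_comm]
    rw [if_neg hu, if_neg hu', Finset.union_comm]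

lemma keyset_inj {z : Fin n} {v w w' : AnnVertex (∀ i, F i)}
    (h : (EG (∀ i, F i)).Adj v w) (h' : (EG (∀ i, F i)).Adj v w')
    (hc : repC z (keyset v w) = repC z (keyset v w')) : w = w' := by
  have hd : Disjoint (suppI v.1) (suppI w.1) := adj_iff.1 h
  have hd' : Disjoint (suppI v.1) (suppI w'.1) := adj_iff.1 h'
  have hS : (suppI v.1).Nonempty := vertex_supp_nonempty v
  have hT : (suppI w.1).Nonempty := vertex_supp_nonempty w
  have hT' : (suppI w'.1).Nonempty := vertex_supp_nonempty w'
  have key : suppI w.1 = suppI w'.1 := by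
    unfold keyset at hc
    by_cases h1 : suppI v.1 ∪ suppI w.1 = Finset.univ <;>
      by_cases h2 : suppI v.1 ∪ suppI w'.1 = Finset.univ
    · rw [if_pos h1, if_pos h2] at hc
      have hc1 : IsCompl (suppI v.1) (suppI w.1) := ⟨hd, codisjoint_iff.2 h1⟩
      have hc2 : IsCompl (suppI v.1) (suppI w'.1) := ⟨hd', codisjoint_iff.2 h2⟩
      rw [← hc1.compl_eq, ← hc2.compl_eq]
    · exfalso
      rw [if_pos h1, if_neg h2] at hc
      rcases repC_eq_cases hc with he | he
      · obtain ⟨i, hi⟩ := hT'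
        have : i ∈ suppI v.1 := by
          rw [he]; exact Finset.mem_union_right _ hi
        exact Finset.disjoint_left.1 hd' this hi
      · obtain ⟨i, hi⟩ := hS
        have h3 : i ∈ (suppI v.1 ∪ suppI w'.1)ᶜ := by rw [← he]; exact hi
        exact Finset.mem_compl.1 h3 (Finset.mem_union_left _ hi)
    · exfalso
      rw [if_neg h1, if_pos h2] at hc
      rcases repC_eq_cases hc with he | he
      · obtain ⟨i, hi⟩ := hT
        have : i ∈ suppI v.1 := by
          rw [← he]; exact Finset.mem_union_right _ hi
        exact Finset.disjoint_left.1 hd this hi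
      · obtain ⟨i, hi⟩ := hS
        have h3 : i ∈ (suppI v.1)ᶜ := by
          rw [← he]
          exact Finset.mem_union_left _ hi
        exact Finset.mem_compl.1 h3 hi
    · rw [if_neg h1, if_neg h2] at hc
      rcases repC_eq_cases hc with he | he
      · ext i
        constructor
        · intro hi
          have : i ∈ suppI v.1 ∪ suppI w'.1 := he ▸ Finset.mem_union_right _ hi
          rcases Finset.mem_union.1 this with h3 | h3
          · exact absurd h3 (Finset.disjoint_right.1 hd hi)
          · exact h3
        · intro hi
          have : i ∈ suppI v.1 ∪ suppI w.1 := he ▸ Finset.mem_union_right _ hi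
          rcases Finset.mem_union.1 this with h3 | h3
          · exact absurd h3 (Finset.disjoint_right.1 hd' hi)
          · exact h3
      · exfalso
        obtain ⟨i, hi⟩ := hS
        have h3 : i ∈ (suppI v.1 ∪ suppI w'.1)ᶜ := by
          rw [← he]; exact Finset.mem_union_left _ hi
        exact Finset.mem_compl.1 h3 (Finset.mem_union_left _ hi)
  exact Subtype.ext (ideal_eq_of_suppI_eq key)

end Coloring
theorem product_of_fields_class_one {n : ℕ} (hn : 2 ≤ n)
    (F : Fin n → Type*) [∀ i, Field (F i)] :
    ∃ d : ℕ,
      (∀ v : AnnVertex (∀ i, F i), ((EG (∀ i, F i)).neighborSet v).ncard ≤ d) ∧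
      (∃ v : AnnVertex (∀ i, F i), ((EG (∀ i, F i)).neighborSet v).ncard = d) ∧
      HasProperEdgeColoring (EG (∀ i, F i)) d := by
  classical
  have hn0 : 0 < n := by omega
  set z : Fin n := ⟨0, hn0⟩ with hz
  refine ⟨2 ^ (n - 1) - 1, ?_, ?_, ?_⟩
  · intro v
    rw [ncard_neighborSet]
    have h1 : 1 ≤ (suppI v.1).card := (vertex_supp_nonempty v).card_pos
    exact Nat.sub_le_sub_right (Nat.pow_le_pow_right (by norm_num) (by omega)) 1
  · have hzu : ({z} : Finset (Fin n)) ≠ Finset.univ := by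
      intro h
      have := congrArg Finset.card h
      rw [Finset.card_singleton, Finset.card_univ, Fintype.card_fin] at this
      omega
    refine ⟨mkV F {z} (Finset.singleton_nonempty z) hzu, ?_⟩
    rw [ncard_neighborSet, suppI_mkV, Finset.card_singleton]
  · have hvalid : ∀ v w : AnnVertex (∀ i, F i), (EG (∀ i, F i)).Adj v w →
        repC z (keyset v w) ⊆ ({z} : Finset (Fin n))ᶜ ∧ (repC z (keyset v w)).Nonempty :=
      fun v w h =>
        ⟨repC_subset_compl_singleton _ _,
         repC_nonempty (keyset_valid h).1 (keyset_valid h).2⟩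
    have hd0 : 0 < 2 ^ (n - 1) - 1 := by
      have : 2 ^ 1 ≤ 2 ^ (n - 1) := Nat.pow_le_pow_right (by norm_num) (by omega)
      omega
    refine ⟨fun v w =>
      if h : (repC z (keyset v w) ⊆ ({z} : Finset (Fin n))ᶜ ∧ (repC z (keyset v w)).Nonempty)
        then colorEquiv z ⟨_, h⟩ else ⟨0, hd0⟩, ?_, ?_⟩
    · intro a b hab
      beta_reduce
      rw [dif_pos (hvalid _ _ hab), dif_pos (hvalid _ _ hab.symm)]
      exact congrArg _ (Subtype.ext (repC_keyset_comm hab))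
    · intro a b b' h h' hne heq
      beta_reduce at heq
      rw [dif_pos (hvalid _ _ h), dif_pos (hvalid _ _ h')] at heq
      have h2 := congrArg Subtype.val ((colorEquiv z).injective heq)
      exact hne (keyset_inj h h' h2)
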